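/- Let m ≥ 1, let b ∈ ℝ^m have nonnegative entries, let u ∈ ℂ^m, and let ũ be the phase-matched synthesis of u with magnitudes b. Then the amplitude loss satisfies f(u) := (1/(2m)) Σ_{i=0}^{m−1} (|(F u)_i| − b_i)² = (1/2) Σ_{l=0}^{m−1} |u_l − ũ_l|². In particular the (generalized) gradient step u − ũ satisfies f(u) = (1/2)‖u − ũ‖². -/

import Mathlib

/-- The `m`-point discrete Fourier transform of `w` (entries indexed `0, …, m-1`):
`(F w)_i = ∑_{l=0}^{m-1} w_l · exp(-2πι i l / m)`. -/
noncomputable def dft (m : ℕ) (w : ℕ → ℂ) (i : ℕ) : ℂ :=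
  ∑ l ∈ Finset.range m,
    w l * Complex.exp (-((2 : ℂ) * (Real.pi : ℂ) * Complex.I * (i : ℂ) * (l : ℂ)) / (m : ℂ))

/-- The phase function: `sgn(w) = w / |w|` for `w ≠ 0` and `sgn(0) = 1`. -/
noncomputable def csgn (w : ℂ) : ℂ :=
  if w = 0 then 1 else w / (‖w‖ : ℂ)

/-- The phase-matched synthesis of `u ∈ ℂ^m` with target magnitudes `b`:
`ũ_l = (1/m) ∑_{i=0}^{m-1} exp(2πι i l / m) · b_i · sgn((F u)_i)`. -/
noncomputable def utilde (m : ℕ) (b : ℕ → ℝ) (u : ℕ → ℂ) (l : ℕ) : ℂ :=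
  ((m : ℂ))⁻¹ * ∑ i ∈ Finset.range m,
    Complex.exp ((2 : ℂ) * (Real.pi : ℂ) * Complex.I * (i : ℂ) * (l : ℂ) / (m : ℂ)) *
      (b i : ℂ) * csgn (dft m u i)

open Complex Finset in
/-- Orthogonality of characters: `∑_{l<m} exp(2πι z l / m)` is `m` if `m ∣ z`, else `0`. -/
lemma orth_sum (m : ℕ) (hm : 1 ≤ m) (z : ℤ) :
    ∑ l ∈ Finset.range m, Complex.exp (2 * (Real.pi:ℂ) * I * z * l / m) =
      if (m:ℤ) ∣ z then (m:ℂ) else 0 := by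
  have hm' : (m:ℂ) ≠ 0 := Nat.cast_ne_zero.mpr (by omega)
  have hζ := Complex.isPrimitiveRoot_exp m (by omega)
  have key : ∀ l : ℕ, Complex.exp (2 * (Real.pi:ℂ) * I * z * l / m) =
      (Complex.exp (2 * (Real.pi:ℂ) * I / m) ^ z) ^ l := by
    intro l
    rw [← Complex.exp_int_mul, ← Complex.exp_nat_mul]
    ring_nf
  rw [Finset.sum_congr rfl (fun l _ => key l)]
  by_cases hdvd : (m:ℤ) ∣ z
  · rw [(hζ.zpow_eq_one_iff_dvd z).mpr hdvd]
    simp [hdvd]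
  · have hne : Complex.exp (2 * (Real.pi:ℂ) * I / m) ^ z ≠ 1 :=
      fun h => hdvd ((hζ.zpow_eq_one_iff_dvd z).mp h)
    rw [geom_sum_eq hne]
    have hpow : (Complex.exp (2 * (Real.pi:ℂ) * I / m) ^ z) ^ m = 1 := by
      rw [← zpow_natCast, ← zpow_mul, mul_comm z (m:ℤ), zpow_mul, zpow_natCast, hζ.pow_eq_one,
        one_zpow]
    rw [hpow]
    simp [hdvd]

lemma dvd_sub_iff_eq {m i j : ℕ} (hi : i < m) (hj : j < m) :
    (m:ℤ) ∣ ((i:ℤ) - (j:ℤ)) ↔ i = j := by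
  constructor
  · intro h
    have h0 : (i:ℤ) - (j:ℤ) = 0 := Int.eq_zero_of_abs_lt_dvd h (by rw [abs_lt]; omega)
    omega
  · rintro rfl; simp

open Complex Finset in
/-- Fourier inversion: the inverse DFT of the DFT recovers the signal. -/
lemma inv_dft (m : ℕ) (hm : 1 ≤ m) (u : ℕ → ℂ) {l : ℕ} (hl : l < m) :
    ((m:ℂ))⁻¹ * ∑ i ∈ Finset.range m,
      Complex.exp ((2:ℂ) * (Real.pi:ℂ) * I * i * l / m) * dft m u i = u l := by
  have hm' : (m:ℂ) ≠ 0 := Nat.cast_ne_zero.mpr (by omega)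
  have step : ∀ l' ∈ Finset.range m,
      (∑ i ∈ Finset.range m, Complex.exp ((2:ℂ) * (Real.pi:ℂ) * I * i * l / m) *
        (u l' * Complex.exp (-((2:ℂ) * (Real.pi:ℂ) * I * i * l') / m))) =
      if l' = l then u l' * m else 0 := by
    intro l' hl'
    have hterm : ∀ i : ℕ, Complex.exp ((2:ℂ) * (Real.pi:ℂ) * I * i * l / m) *
        (u l' * Complex.exp (-((2:ℂ) * (Real.pi:ℂ) * I * i * l') / m)) =
        u l' * Complex.exp (2 * (Real.pi:ℂ) * I * (((l:ℤ) - (l':ℤ)):ℤ) * i / m) := by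
      intro i
      rw [show ((2:ℂ) * (Real.pi:ℂ) * I * (((l:ℤ) - (l':ℤ)):ℤ) * i / m) =
        (2:ℂ) * (Real.pi:ℂ) * I * i * l / m + -((2:ℂ) * (Real.pi:ℂ) * I * i * l') / m by
          push_cast; ring, Complex.exp_add]
      ring
    rw [Finset.sum_congr rfl (fun i _ => hterm i), ← Finset.mul_sum,
      orth_sum m hm ((l:ℤ) - (l':ℤ))]
    have hcond := dvd_sub_iff_eq hl (Finset.mem_range.mp hl')
    by_cases h : l' = l
    · subst h; rw [if_pos (hcond.mpr rfl), if_pos rfl]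
    · rw [if_neg (fun hd => h (hcond.mp hd).symm), if_neg h, mul_zero]
  have hS : ∑ i ∈ Finset.range m,
      Complex.exp ((2:ℂ) * (Real.pi:ℂ) * I * i * l / m) * dft m u i = u l * m := by
    unfold dft
    simp_rw [Finset.mul_sum]
    rw [Finset.sum_comm, Finset.sum_congr rfl step,
      Finset.sum_ite_eq' (Finset.range m) l (fun l' => u l' * m),
      if_pos (Finset.mem_range.mpr hl)]
  rw [hS]
  field_simp

open Complex Finset in
/-- Parseval / Plancherel for the inverse DFT. -/
lemma parseval_idft (m : ℕ) (hm : 1 ≤ m) (w : ℕ → ℂ) :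
    ∑ l ∈ Finset.range m,
      (((m:ℂ))⁻¹ * ∑ i ∈ Finset.range m,
          Complex.exp ((2:ℂ) * (Real.pi:ℂ) * I * i * l / m) * w i) *
        (starRingEnd ℂ) (((m:ℂ))⁻¹ * ∑ i ∈ Finset.range m,
          Complex.exp ((2:ℂ) * (Real.pi:ℂ) * I * i * l / m) * w i) =
      ((m:ℂ))⁻¹ * ∑ i ∈ Finset.range m, w i * (starRingEnd ℂ) (w i) := by
  have hm' : (m:ℂ) ≠ 0 := Nat.cast_ne_zero.mpr (by omega)
  have expand : ∀ l : ℕ,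
      (∑ i ∈ Finset.range m, Complex.exp ((2:ℂ) * (Real.pi:ℂ) * I * i * l / m) * w i) *
        (starRingEnd ℂ) (∑ i ∈ Finset.range m,
          Complex.exp ((2:ℂ) * (Real.pi:ℂ) * I * i * l / m) * w i) =
      ∑ i ∈ Finset.range m, ∑ j ∈ Finset.range m,
        (w i * (starRingEnd ℂ) (w j)) *
          Complex.exp (2 * (Real.pi:ℂ) * I * (((i:ℤ) - (j:ℤ)):ℤ) * l / m) := by
    intro l
    rw [map_sum, Finset.sum_mul_sum]
    refine Finset.sum_congr rfl fun i _ => Finset.sum_congr rfl fun j _ => ?_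
    rw [map_mul, ← Complex.exp_conj]
    have hc : (starRingEnd ℂ) ((2:ℂ) * (Real.pi:ℂ) * I * j * l / m) =
        -((2:ℂ) * (Real.pi:ℂ) * I * j * l) / m := by
      simp [map_div₀, map_mul, Complex.conj_I, map_ofNat]
    rw [hc, show (2 * (Real.pi:ℂ) * I * (((i:ℤ) - (j:ℤ)):ℤ) * l / m) =
        (2:ℂ) * (Real.pi:ℂ) * I * i * l / m + -((2:ℂ) * (Real.pi:ℂ) * I * j * l) / m by
      push_cast; ring, Complex.exp_add]
    ring
  have conj_inv : (starRingEnd ℂ) ((m:ℂ))⁻¹ = ((m:ℂ))⁻¹ := by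
    simp
  simp_rw [map_mul, conj_inv, mul_mul_mul_comm]
  rw [← Finset.mul_sum, Finset.sum_congr rfl (fun l _ => expand l), Finset.sum_comm]
  have inner : ∀ i ∈ Finset.range m,
      (∑ l ∈ Finset.range m, ∑ j ∈ Finset.range m,
        (w i * (starRingEnd ℂ) (w j)) *
          Complex.exp (2 * (Real.pi:ℂ) * I * (((i:ℤ) - (j:ℤ)):ℤ) * l / m)) =
      (w i * (starRingEnd ℂ) (w i)) * m := by
    intro i hi
    rw [Finset.sum_comm]
    have hj : ∀ j ∈ Finset.range m,
        (∑ l ∈ Finset.range m, (w i * (starRingEnd ℂ) (w j)) *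
          Complex.exp (2 * (Real.pi:ℂ) * I * (((i:ℤ) - (j:ℤ)):ℤ) * l / m)) =
        if j = i then (w i * (starRingEnd ℂ) (w j)) * m else 0 := by
      intro j hj
      rw [← Finset.mul_sum, orth_sum m hm ((i:ℤ) - (j:ℤ))]
      have hcond := dvd_sub_iff_eq (Finset.mem_range.mp hi) (Finset.mem_range.mp hj)
      by_cases h : j = i
      · subst h; rw [if_pos (hcond.mpr rfl), if_pos rfl]
      · rw [if_neg (fun hd => h (hcond.mp hd).symm), if_neg h, mul_zero]
    rw [Finset.sum_congr rfl hj,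
      Finset.sum_ite_eq' (Finset.range m) i (fun j => (w i * (starRingEnd ℂ) (w j)) * m),
      if_pos hi]
  rw [Finset.sum_congr rfl inner, ← Finset.sum_mul]
  field_simp

/-- Pointwise identity: `|z - b·sgn(z)|² = (|z| - b)²`. -/
lemma normSq_sub_csgn (b : ℝ) (z : ℂ) :
    Complex.normSq (z - (b:ℂ) * csgn z) = (‖z‖ - b)^2 := by
  unfold csgn
  by_cases hz : z = 0
  · subst hz
    simp [Complex.normSq_ofReal]
    ring
  · rw [if_neg hz]
    have habs : ‖z‖ ≠ 0 := norm_ne_zero_iff.mpr hz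
    have h1 : z - (b:ℂ) * (z / (‖z‖ : ℂ)) =
        z * (((1 - b / ‖z‖ : ℝ)):ℂ) := by
      push_cast; ring
    rw [h1, Complex.normSq_mul, Complex.normSq_ofReal, ← Complex.sq_norm]
    field_simp

/-- The amplitude loss equals half the squared distance to the phase-matched synthesis:
`f(u) = (1/(2m)) ∑_{i<m} (|(F u)_i| - b_i)² = (1/2) ∑_{l<m} |u_l - ũ_l|²`. -/
theorem stmt11 (m : ℕ) (hm : 1 ≤ m) (b : ℕ → ℝ) (hb : ∀ i, 0 ≤ b i) (u : ℕ → ℂ) :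
    (1 / (2 * m) : ℝ) * ∑ i ∈ Finset.range m, (‖dft m u i‖ - b i) ^ 2 =
      (1 / 2 : ℝ) * ∑ l ∈ Finset.range m, ‖u l - utilde m b u l‖ ^ 2 := by
  have hm' : (m:ℝ) ≠ 0 := Nat.cast_ne_zero.mpr (by omega)
  set W : ℕ → ℂ := fun i => dft m u i - (b i : ℂ) * csgn (dft m u i) with hW
  have hdiff : ∀ l ∈ Finset.range m, u l - utilde m b u l =
      ((m:ℂ))⁻¹ * ∑ i ∈ Finset.range m,
        Complex.exp ((2:ℂ) * (Real.pi:ℂ) * Complex.I * i * l / m) * W i := by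
    intro l hl
    rw [utilde, ← inv_dft m hm u (Finset.mem_range.mp hl), ← mul_sub,
      ← Finset.sum_sub_distrib]
    congr 1
    refine Finset.sum_congr rfl fun i _ => ?_
    simp only [hW]
    ring
  have hpar := parseval_idft m hm W
  simp_rw [Complex.mul_conj] at hpar
  have hreal : ∑ l ∈ Finset.range m,
      Complex.normSq (((m:ℂ))⁻¹ * ∑ i ∈ Finset.range m,
        Complex.exp ((2:ℂ) * (Real.pi:ℂ) * Complex.I * i * l / m) * W i) =
      (m:ℝ)⁻¹ * ∑ i ∈ Finset.range m, Complex.normSq (W i) := by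
    apply Complex.ofReal_injective
    push_cast
    exact_mod_cast hpar
  have h1 : ∀ i ∈ Finset.range m,
      (‖dft m u i‖ - b i) ^ 2 = Complex.normSq (W i) :=
    fun i _ => (normSq_sub_csgn (b i) (dft m u i)).symm
  have h2 : ∀ l ∈ Finset.range m, ‖u l - utilde m b u l‖ ^ 2 =
      Complex.normSq (((m:ℂ))⁻¹ * ∑ i ∈ Finset.range m,
        Complex.exp ((2:ℂ) * (Real.pi:ℂ) * Complex.I * i * l / m) * W i) := by
    intro l hl
    rw [Complex.sq_norm, hdiff l hl]
  rw [Finset.sum_congr rfl h1, Finset.sum_congr rfl h2, hreal]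
  field_simp
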